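/- If x₁,…,x₅ ∈ ℝ⁴ are distinct points, u₁,…,u₅ are all nonzero reals satisfying Σ_{j≠i} (x_i - x_j)/|x_i - x_j|³ · u_j = 0 for all 1 ≤ i ≤ 5, then the span of {x₁ - x_i : i = 2,…,5} has dimension at most 3, i.e., the five points lie in a common 3-dimensional affine subspace. -/

import Mathlib

open Finset in
theorem stmt_16 (x : Fin 5 → EuclideanSpace ℝ (Fin 4))
    (hinj : Function.Injective x)
    (u : Fin 5 → ℝ) (hu : ∀ i, u i ≠ 0)
    (h : ∀ i, ∑ j ∈ univ \ {i}, (u j / ‖x i - x j‖ ^ 3) • (x i - x j) = 0) :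
    Module.finrank ℝ
      (Submodule.span ℝ (Set.range fun i : Fin 4 => x 0 - x i.succ)) ≤ 3 := by
  set v : Fin 4 → EuclideanSpace ℝ (Fin 4) := fun i => x 0 - x i.succ with hv
  -- the coefficients from equation i = 0
  set g : Fin 4 → ℝ := fun i => u i.succ / ‖x 0 - x i.succ‖ ^ 3 with hg
  have hgne : ∀ i, g i ≠ 0 := by
    intro i
    have hxne : x 0 ≠ x i.succ := fun hEq => (Fin.succ_ne_zero i) (hinj hEq).symm
    have : ‖x 0 - x i.succ‖ ≠ 0 := by
      simpa [sub_eq_zero] using hxne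
    exact div_ne_zero (hu _) (pow_ne_zero _ this)
  -- the relation ∑ g i • v i = 0
  have hrel : ∑ i : Fin 4, g i • v i = 0 := by
    have h0 := h 0
    have hf0 : (u 0 / ‖x 0 - x 0‖ ^ 3) • (x 0 - x 0) = 0 := by simp
    calc ∑ i : Fin 4, g i • v i
        = ∑ j : Fin 5, (u j / ‖x 0 - x j‖ ^ 3) • (x 0 - x j) := by
          conv_rhs => rw [Fin.sum_univ_succ]
          rw [hf0, zero_add]
      _ = ∑ j ∈ univ \ {0}, (u j / ‖x 0 - x j‖ ^ 3) • (x 0 - x j) := by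
          rw [Finset.sum_sdiff_eq_sub (Finset.subset_univ _)]
          simp [hf0]
      _ = 0 := h0
  have hdep : ¬ LinearIndependent ℝ v := by
    intro hli
    exact hgne 0 ((Fintype.linearIndependent_iff.mp hli g hrel) 0)
  by_contra hlt
  push_neg at hlt
  have hle : Module.finrank ℝ (Submodule.span ℝ (Set.range v)) ≤ 4 := by
    simpa [Set.finrank] using finrank_range_le_card v
  have heq : Fintype.card (Fin 4) = Set.finrank ℝ (Set.range v) := by
    have : Module.finrank ℝ (Submodule.span ℝ (Set.range v)) = 4 := le_antisymm hle hlt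
    simpa [Set.finrank] using this.symm
  exact hdep (linearIndependent_iff_card_eq_finrank_span.mpr heq)
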